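/- If X is an Irr-continuous sup-sober T₀-space, or an SI⁻-continuous T₀-space, then the Irr-convergence class 𝓘 satisfies Kelley's (Iterated limits) axiom: whenever a net (x_i)_{i∈I} Irr-converges to x and for each i ∈ I a net (x_{i,j})_{j∈J(i)} Irr-converges to x_i, the net (x_{i,f(i)}) indexed by I × ∏_{i∈I} J(i) (with the product pre-order) Irr-converges to x. -/

import Mathlib

universe u v w

open Set

/-- A preordered index type is a (nonempty) directed index set for nets. -/
def IsDirIdx (I : Type v) [Preorder I] : Prop :=
  Nonempty I ∧ ∀ i j : I, ∃ k, i ≤ k ∧ j ≤ k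

/-- Convergence of a net with respect to a topology `t` on `X`. -/
def NetConv {X : Type u} (t : TopologicalSpace X) {I : Type v} [Preorder I]
    (net : I → X) (x : X) : Prop :=
  ∀ U : Set X, t.IsOpen U → x ∈ U → ∃ k, ∀ i, k ≤ i → net i ∈ U

section
variable {X : Type u} [TopologicalSpace X]

/-- The specialisation order: `x ≤ y` iff `x ∈ cl {y}`. -/
def sLE (x y : X) : Prop := x ∈ closure ({y} : Set X)

/-- `b` is an upper bound of `A` in the specialisation order. -/
def IsUB (A : Set X) (b : X) : Prop := ∀ a ∈ A, sLE a b

/-- `s` is the supremum (least upper bound) of `A` in the specialisation order. -/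
def IsSupSpec (A : Set X) (s : X) : Prop := IsUB A s ∧ ∀ b, IsUB A b → sLE s b

/-- The upper set `↑x` in the specialisation order. -/
def upS (x : X) : Set X := {u | sLE x u}

/-- The lower set `↓A` in the specialisation order. -/
def downS (A : Set X) : Set X := {u | ∃ a ∈ A, sLE u a}

/-- The Irr-way-below relation: `x ≪_Irr y` iff every irreducible set `E`
whose supremum exists and dominates `y` meets `↑x`. -/
def wbIrr (x y : X) : Prop :=
  ∀ E : Set X, IsIrreducible E → ∀ s : X, IsSupSpec E s → sLE y s → (E ∩ upS x).Nonempty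

/-- `↡x = {u | u ≪_Irr x}`. -/
def ddIrr (x : X) : Set X := {u | wbIrr u x}

/-- `↟x = {u | x ≪_Irr u}`. -/
def uuIrr (x : X) : Set X := {u | wbIrr x u}

/-- A directed subset (w.r.t. the specialisation order): nonempty and every
pair of elements has an upper bound in the set. -/
def DirectedSub (D : Set X) : Prop :=
  D.Nonempty ∧ ∀ a ∈ D, ∀ b ∈ D, ∃ c ∈ D, sLE a c ∧ sLE b c

/-- `e` is an eventual lower bound of the net `net`. -/
def EvLB {I : Type v} [Preorder I] (net : I → X) (e : X) : Prop :=
  ∃ k, ∀ i, k ≤ i → sLE e (net i)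

/-- Irr-convergence: the net `net` Irr-converges to `y` iff there is an
irreducible set `E` with a supremum `≥ y` consisting of eventual lower
bounds of the net. -/
def IrrConv {I : Type v} [Preorder I] (net : I → X) (y : X) : Prop :=
  ∃ E : Set X, IsIrreducible E ∧ (∃ s, IsSupSpec E s ∧ sLE y s) ∧ ∀ e ∈ E, EvLB net e

end

/-- Sup-sobriety: every closed irreducible set having a supremum is the
closure of the singleton of its supremum. -/
def SupSober (X : Type u) [TopologicalSpace X] : Prop :=
  ∀ F : Set X, IsClosed F → IsIrreducible F → ∀ s : X, IsSupSpec F s → F = closure {s}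

/-- `U` is open in the irreducibly-derived topology `τ_SI`. -/
def SIOpen {X : Type u} [TopologicalSpace X] (U : Set X) : Prop :=
  IsOpen U ∧ ∀ E : Set X, IsIrreducible E → ∀ s : X, IsSupSpec E s → s ∈ U →
    (E ∩ U).Nonempty

/-- Interior with respect to the irreducibly-derived topology. -/
def SIint {X : Type u} [TopologicalSpace X] (A : Set X) : Set X :=
  ⋃₀ {U : Set X | SIOpen U ∧ U ⊆ A}

/-- Irr-continuity: every `↡x` is irreducible with supremum `x`. -/
def IrrCont (X : Type u) [TopologicalSpace X] : Prop :=
  ∀ x : X, IsIrreducible (ddIrr x) ∧ IsSupSpec (ddIrr x) x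

/-- SI⁻-continuity: every `↡x` contains a directed subset with supremum `x`. -/
def SImCont (X : Type u) [TopologicalSpace X] : Prop :=
  ∀ x : X, ∃ D : Set X, D ⊆ ddIrr x ∧ DirectedSub D ∧ IsSupSpec D x

/-- The `*`-property: for every irreducible `F` with a supremum there is a
directed subset of `↓F` with the same supremum. -/
def StarProp (X : Type u) [TopologicalSpace X] : Prop :=
  ∀ F : Set X, IsIrreducible F → ∀ s : X, IsSupSpec F s →
    ∃ D : Set X, D ⊆ downS F ∧ DirectedSub D ∧ IsSupSpec D s

/-- The `⊕`-property: every `↟x` is open. -/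
def OplusProp (X : Type u) [TopologicalSpace X] : Prop :=
  ∀ x : X, IsOpen (uuIrr x)

/-- C-space: for every open `U` and `x ∈ U` there is `y ∈ U` with
`x ∈ int (↑y)`. -/
def CSpace (X : Type u) [TopologicalSpace X] : Prop :=
  ∀ U : Set X, IsOpen U → ∀ x ∈ U, ∃ y ∈ U, x ∈ interior (upS y)

/-- The Irr-convergence class is topological: some topology induces it. -/
def IrrTopological (X : Type u) [TopologicalSpace X] : Prop :=
  ∃ t : TopologicalSpace X, ∀ (I : Type u) [Preorder I], IsDirIdx I →
    ∀ (net : I → X) (y : X), IrrConv net y ↔ NetConv t net y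

/-- The family `τ_𝓘` of sets induced by the Irr-convergence class. -/
def tauI (X : Type u) [TopologicalSpace X] : Set (Set X) :=
  {U | ∀ (I : Type u) [Preorder I], IsDirIdx I → ∀ (net : I → X) (y : X),
      IrrConv net y → y ∈ U → ∃ k, ∀ i, k ≤ i → net i ∈ U}

/-- Kelley's (Iterated limits) axiom for the Irr-convergence class. -/
def IterLimAxiom (X : Type u) [TopologicalSpace X] : Prop :=
  ∀ (I : Type u) [Preorder I], IsDirIdx I →
    ∀ (J : I → Type u) [∀ i, Preorder (J i)], (∀ i, IsDirIdx (J i)) →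
      ∀ (xi : I → X) (xx : ∀ i, J i → X) (x : X),
        IrrConv xi x → (∀ i, IrrConv (xx i) (xi i)) →
        IrrConv (fun p : I × (∀ i, J i) => xx p.1 (p.2 p.1)) x
section AuxLemmas
variable {X : Type u} [TopologicalSpace X]

lemma sLE_refl (x : X) : sLE x x := subset_closure rfl

lemma sLE_trans {x y z : X} (h1 : sLE x y) (h2 : sLE y z) : sLE x z := by
  have h : closure ({y} : Set X) ⊆ closure {z} :=
    closure_minimal (by simpa [Set.singleton_subset_iff, sLE] using h2) isClosed_closure
  exact h h1

lemma isSupSpec_singleton (y : X) : IsSupSpec ({y} : Set X) y :=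
  ⟨fun a ha => subset_closure ha, fun b hb => hb y rfl⟩

lemma wbIrr_le {u y : X} (h : wbIrr u y) : sLE u y := by
  obtain ⟨v, hv, huv⟩ := h {y} isIrreducible_singleton y (isSupSpec_singleton y) (sLE_refl y)
  rw [Set.mem_singleton_iff] at hv; exact hv ▸ huv

lemma wbIrr_mono {u y z : X} (h : wbIrr u y) (hyz : sLE y z) : wbIrr u z :=
  fun E hE s hs hzs => h E hE s hs (sLE_trans hyz hzs)

lemma isSupSpec_closure {A : Set X} {s : X} (h : IsSupSpec A s) :
    IsSupSpec (closure A) s := by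
  constructor
  · intro a ha
    have hsub : A ⊆ closure ({s} : Set X) := fun b hb => h.1 b hb
    exact closure_minimal hsub isClosed_closure ha
  · exact fun b hb => h.2 b fun a ha => hb a (subset_closure ha)

lemma isIrreducible_of_closure {A : Set X} (hne : A.Nonempty)
    (h : IsIrreducible (closure A)) : IsIrreducible A := by
  refine ⟨hne, fun U V hU hV hAU hAV => ?_⟩
  have h1 : (closure A ∩ U).Nonempty :=
    hAU.mono (Set.inter_subset_inter_left U subset_closure)
  have h2 : (closure A ∩ V).Nonempty :=
    hAV.mono (Set.inter_subset_inter_left V subset_closure)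
  obtain ⟨z, hzA, hzUV⟩ := h.2 U V hU hV h1 h2
  obtain ⟨a, haUV, haA⟩ := mem_closure_iff.mp hzA (U ∩ V) (hU.inter hV) hzUV
  exact ⟨a, haA, haUV⟩

lemma directedSub_irreducible {D : Set X} (h : DirectedSub D) : IsIrreducible D := by
  refine ⟨h.1, fun U V hU hV h1 h2 => ?_⟩
  obtain ⟨a, haD, haU⟩ := h1
  obtain ⟨b, hbD, hbV⟩ := h2
  obtain ⟨c, hcD, hac, hbc⟩ := h.2 a haD b hbD
  have hcU : c ∈ U := by
    obtain ⟨z, _, hz2⟩ := mem_closure_iff.mp hac U hU haU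
    rw [Set.mem_singleton_iff] at hz2; subst hz2; assumption
  have hcV : c ∈ V := by
    obtain ⟨z, _, hz2⟩ := mem_closure_iff.mp hbc V hV hbV
    rw [Set.mem_singleton_iff] at hz2; subst hz2; assumption
  exact ⟨c, hcD, hcU, hcV⟩

/-- The key construction: an irreducible set with supremum `x` each of whose
members is "doubly way below" `x`. -/
lemma exists_doubly_wayBelow (hX : (IrrCont X ∧ SupSober X) ∨ SImCont X) (x : X) :
    ∃ F : Set X, IsIrreducible F ∧ IsSupSpec F x ∧
      ∀ d ∈ F, ∃ e, wbIrr d e ∧ wbIrr e x := by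
  rcases hX with ⟨hI, hS⟩ | hC
  · -- Irr-continuous and sup-sober
    refine ⟨{d | ∃ e, wbIrr e x ∧ wbIrr d e}, ?_, ?_, ?_⟩
    · -- irreducible
      have hsub : {d | ∃ e, wbIrr e x ∧ wbIrr d e} ⊆ ddIrr x := by
        rintro d ⟨e, hex, hde⟩
        exact wbIrr_mono hde (wbIrr_le hex)
      have hsup : ddIrr x ⊆ closure {d | ∃ e, wbIrr e x ∧ wbIrr d e} := by
        intro e he
        have hcl : closure (ddIrr e) = closure {e} :=
          hS (closure (ddIrr e)) isClosed_closure ((hI e).1).closure e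
            (isSupSpec_closure (hI e).2)
        have hee : e ∈ closure (ddIrr e) := by
          rw [hcl]; exact subset_closure rfl
        have hsub2 : ddIrr e ⊆ {d | ∃ e', wbIrr e' x ∧ wbIrr d e'} :=
          fun d hd => ⟨e, he, hd⟩
        exact closure_mono hsub2 hee
      have hne : {d | ∃ e, wbIrr e x ∧ wbIrr d e}.Nonempty := by
        obtain ⟨e, he⟩ := ((hI x).1).1
        obtain ⟨d, hd⟩ := ((hI e).1).1
        exact ⟨d, e, he, hd⟩
      have hcleq : closure {d | ∃ e, wbIrr e x ∧ wbIrr d e} = closure (ddIrr x) :=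
        Set.Subset.antisymm (closure_minimal (hsub.trans subset_closure) isClosed_closure)
          (closure_minimal hsup isClosed_closure)
      exact isIrreducible_of_closure hne (hcleq ▸ ((hI x).1).closure)
    · -- supremum is x
      constructor
      · rintro d ⟨e, hex, hde⟩
        exact sLE_trans (wbIrr_le hde) (wbIrr_le hex)
      · intro b hb
        refine (hI x).2.2 b fun e he => ?_
        exact (hI e).2.2 b fun d hd => hb d ⟨e, he, hd⟩
    · rintro d ⟨e, hex, hde⟩; exact ⟨e, hde, hex⟩
  · -- SI⁻-continuous
    choose D hDsub hDdir hDsup using hC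
    refine ⟨{d | ∃ e ∈ D x, d ∈ D e}, ?_, ?_, ?_⟩
    · -- irreducible : directed
      refine directedSub_irreducible ⟨?_, ?_⟩
      · obtain ⟨e, he⟩ := (hDdir x).1
        obtain ⟨d, hd⟩ := (hDdir e).1
        exact ⟨d, e, he, hd⟩
      · rintro a ⟨e1, he1, ha⟩ b ⟨e2, he2, hb⟩
        obtain ⟨e, he, he1e, he2e⟩ := (hDdir x).2 e1 he1 e2 he2
        have hae : wbIrr a e := wbIrr_mono (hDsub e1 ha) he1e
        have hbe : wbIrr b e := wbIrr_mono (hDsub e2 hb) he2e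
        obtain ⟨c1, hc1, hac1⟩ :=
          hae (D e) (directedSub_irreducible (hDdir e)) e (hDsup e) (sLE_refl e)
        obtain ⟨c2, hc2, hbc2⟩ :=
          hbe (D e) (directedSub_irreducible (hDdir e)) e (hDsup e) (sLE_refl e)
        obtain ⟨c, hc, hc1c, hc2c⟩ := (hDdir e).2 c1 hc1 c2 hc2
        exact ⟨c, ⟨e, he, hc⟩, sLE_trans hac1 hc1c, sLE_trans hbc2 hc2c⟩
    · -- supremum is x
      constructor
      · rintro d ⟨e, he, hd⟩
        exact sLE_trans (wbIrr_le (hDsub e hd)) (wbIrr_le (hDsub x he))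
      · intro b hb
        refine (hDsup x).2 b fun e he => ?_
        exact (hDsup e).2 b fun d hd => hb d ⟨e, he, hd⟩
    · rintro d ⟨e, he, hd⟩
      exact ⟨e, hDsub e hd, hDsub x he⟩

end AuxLemmas

/-- the (Iterated limits) axiom holds in Irr-continuous
sup-sober spaces and in SI⁻-continuous spaces. -/
theorem irrConv_iteratedLimits {X : Type u} [TopologicalSpace X] [T0Space X]
    (hX : (IrrCont X ∧ SupSober X) ∨ SImCont X) :
    IterLimAxiom X := by
  intro I _ _hI J _ hJ xi xx x hxi hxx
  obtain ⟨F, hFirr, hFsup, hFwb⟩ := exists_doubly_wayBelow hX x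
  refine ⟨F, hFirr, ⟨x, hFsup, sLE_refl x⟩, ?_⟩
  intro d hd
  obtain ⟨e, hde, hex⟩ := hFwb d hd
  obtain ⟨E', hE'irr, ⟨s, hs, hxs⟩, hE'lb⟩ := hxi
  obtain ⟨e', he'E, hee'⟩ := hex E' hE'irr s hs hxs
  obtain ⟨k, hk⟩ := hE'lb e' he'E
  have hdxi : ∀ i, k ≤ i → wbIrr d (xi i) := fun i hi =>
    wbIrr_mono hde (sLE_trans hee' (hk i hi))
  have hthresh : ∀ i, ∃ m : J i, k ≤ i → ∀ j, m ≤ j → sLE d (xx i j) := by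
    intro i
    by_cases hi : k ≤ i
    · obtain ⟨E, hE, ⟨t, ht, hxit⟩, hlb⟩ := hxx i
      obtain ⟨c, hcE, hdc⟩ := hdxi i hi E hE t ht hxit
      obtain ⟨m, hm⟩ := hlb c hcE
      exact ⟨m, fun _ j hj => sLE_trans hdc (hm j hj)⟩
    · obtain ⟨j⟩ := (hJ i).1
      exact ⟨j, fun h => absurd h hi⟩
  choose g hg using hthresh
  refine ⟨(k, g), ?_⟩
  rintro ⟨i, f⟩ ⟨hik, hfg⟩
  exact hg i hik (f i) (hfg i)
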